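/- k-NN high-probability shrinkage: suppose μ is (C,d)-homogeneous on B(x,r), i.e., μ(B(x,r)) ≤ C θ^{−d} μ(B(x,θr)) for all θ ∈ (0,1). Let X₁,…,X_s be i.i.d. ∼ μ and X_{(k)} the k-th nearest sample to x. For any δ with 2exp(−μ(B(x,r))s/(8C)) ≤ δ ≤ (1/2)exp(−k/2), with probability at least 1−δ, ‖x − X_{(k)}‖₂ ≤ r·(8C log(2/δ)/(μ(B(x,r)) s))^{1/d}. -/

import Mathlib

set_option maxHeartbeats 1000000


open MeasureTheory

open ProbabilityTheory in
/-- k-NN high-probability shrinkage: suppose `μ` is `(C,d)`-homogeneous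
on `B(x,r)`, and `X₁,…,X_s` are i.i.d. `∼ μ`. For any `δ` with
`2 exp(−μ(B(x,r)) s/(8C)) ≤ δ ≤ (1/2) exp(−k/2)`, with probability at least `1−δ`
the distance from `x` to its `k`-th nearest sample is at most
`r·(8C log(2/δ)/(μ(B(x,r)) s))^{1/d}`; equivalently, at least `k` of the samples lie
within that radius of `x`. -/
theorem knn_shrinkage_high_probability {Ω : Type*} [MeasureSpace Ω]
    [IsProbabilityMeasure (volume : Measure Ω)] {D s k : ℕ} (hk : 1 ≤ k) (hks : k ≤ s)
    (μ : Measure (EuclideanSpace ℝ (Fin D))) [IsProbabilityMeasure μ]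
    (x : EuclideanSpace ℝ (Fin D)) (C d r : ℝ) (hC : 0 < C) (hd : 0 < d) (hr : 0 < r)
    (hhom : ∀ θ : ℝ, θ ∈ Set.Ioo (0 : ℝ) 1 →
      (μ (Metric.ball x r)).toReal ≤ C * θ ^ (-d) * (μ (Metric.ball x (θ * r))).toReal)
    (X : Fin s → Ω → EuclideanSpace ℝ (Fin D)) (hmeas : ∀ i, Measurable (X i))
    (hlaw : ∀ i, Measure.map (X i) (volume : Measure Ω) = μ)
    (hindep : ProbabilityTheory.iIndepFun X (volume : Measure Ω))
    (δ : ℝ)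
    (hδlo : 2 * Real.exp (-((μ (Metric.ball x r)).toReal * s / (8 * C))) ≤ δ)
    (hδhi : δ ≤ (1 / 2) * Real.exp (-(k : ℝ) / 2)) :
    1 - δ ≤ ((volume : Measure Ω) {ω | ∃ I : Finset (Fin s), k ≤ I.card ∧
        ∀ i ∈ I, dist (X i ω) x ≤
          r * (8 * C * Real.log (2 / δ) / ((μ (Metric.ball x r)).toReal * s)) ^ (1 / d)
        }).toReal := by
  classical
  have hs0 : 0 < s := lt_of_lt_of_le hk hks
  have hsR : (0:ℝ) < s := by exact_mod_cast hs0
  have hkR : (1:ℝ) ≤ k := by exact_mod_cast hk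
  set pB : ℝ := (μ (Metric.ball x r)).toReal with hpBdef
  have hδ0 : 0 < δ := lt_of_lt_of_le (by positivity) hδlo
  have hδ1 : δ < 1 := by
    have h1 : Real.exp (-(k:ℝ)/2) ≤ 1 := Real.exp_le_one_iff.mpr (by nlinarith)
    nlinarith
  have hpB1 : pB ≤ 1 := by
    have h := measure_mono (μ := μ) (Set.subset_univ (Metric.ball x r))
    have := ENNReal.toReal_mono (by simp) h
    simpa using this
  have hpB0 : 0 < pB := by
    rcases (ENNReal.toReal_nonneg : 0 ≤ pB).lt_or_eq with h | h
    · exact h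
    · exfalso
      rw [hpBdef, ← h] at hδlo
      norm_num at hδlo
      linarith
  -- C ≥ 1
  have hkey : ∀ θ : ℝ, θ ∈ Set.Ioo (0:ℝ) 1 → θ ^ d ≤ C := by
    intro θ hθ
    have h1 := hhom θ hθ
    have hsub : (μ (Metric.ball x (θ*r))).toReal ≤ pB := by
      refine ENNReal.toReal_mono (measure_ne_top μ _) (measure_mono (Metric.ball_subset_ball ?_))
      nlinarith [hθ.2, hr]
    have hθd : 0 < θ ^ d := Real.rpow_pos_of_pos hθ.1 d
    rw [Real.rpow_neg hθ.1.le] at h1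
    have h2 : pB ≤ C * (θ^d)⁻¹ * pB :=
      le_trans h1 (mul_le_mul_of_nonneg_left hsub (by positivity))
    have h4 := mul_le_mul_of_nonneg_left h2 hθd.le
    have h5 : θ^d * (C * (θ^d)⁻¹ * pB) = C * pB := by field_simp
    rw [h5] at h4
    exact le_of_mul_le_mul_right h4 hpB0
  have hC1 : (1:ℝ) ≤ C := by
    have h0 : Filter.Tendsto (fun n : ℕ => (1:ℝ)/((n:ℝ)+1)) Filter.atTop (nhds 0) :=
      tendsto_one_div_add_atTop_nhds_zero_nat
    have h1 : Filter.Tendsto (fun n : ℕ => (1 - 1/((n:ℝ)+1))) Filter.atTop (nhds 1) := by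
      simpa using (tendsto_const_nhds (x := (1:ℝ))).sub h0
    have h2 : Filter.Tendsto (fun n : ℕ => (1 - 1/((n:ℝ)+1)) ^ d) Filter.atTop (nhds 1) := by
      have hc : ContinuousAt (fun y : ℝ => y ^ d) 1 :=
        Real.continuousAt_rpow_const 1 d (Or.inl one_ne_zero)
      simpa [Real.one_rpow, Function.comp_def] using hc.tendsto.comp h1
    refine le_of_tendsto h2 ?_
    filter_upwards [Filter.eventually_ge_atTop 1] with n hn
    refine hkey _ ⟨?_, ?_⟩
    · have hn1 : (1:ℝ) ≤ (n:ℝ) := by exact_mod_cast hn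
      have hlt : (1:ℝ)/((n:ℝ)+1) ≤ 1/2 := by
        rw [div_le_div_iff₀ (by linarith) (by norm_num)]; linarith
      linarith
    · have : (0:ℝ) < 1/((n:ℝ)+1) := by positivity
      linarith
  set L : ℝ := Real.log (2/δ) with hLdef
  have hL : 0 < L := Real.log_pos (by rw [lt_div_iff₀ hδ0]; linarith)
  set t0 : ℝ := 8 * C * L / (pB * ↑s) with ht0def
  have ht0pos : 0 < t0 := by
    apply div_pos (by positivity) (by positivity)
  have ht0le : t0 ≤ 1 := by
    have h1 : Real.exp (-(pB * ↑s / (8*C))) ≤ δ/2 := by linarith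
    have h2 : -(pB * ↑s / (8*C)) ≤ Real.log (δ/2) := by
      have := Real.exp_le_exp.mpr (le_of_eq (Real.exp_log (by positivity : (0:ℝ) < δ/2)).symm)
      calc -(pB * ↑s / (8*C)) = Real.log (Real.exp (-(pB * ↑s / (8*C)))) :=
            (Real.log_exp _).symm
        _ ≤ Real.log (δ/2) := Real.log_le_log (Real.exp_pos _) h1
    have h3 : L = -Real.log (δ/2) := by
      rw [hLdef, ← Real.log_inv]
      norm_num
    have h4 : L ≤ pB * ↑s / (8*C) := by rw [h3]; linarith
    rw [ht0def, div_le_one (by positivity)]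
    rw [le_div_iff₀ (by positivity)] at h4
    linarith
  set θ0 : ℝ := t0 ^ (1/d) with hθ0def
  have hθ0pos : 0 < θ0 := Real.rpow_pos_of_pos ht0pos _
  have hθ0le : θ0 ≤ 1 := Real.rpow_le_one ht0pos.le ht0le (by positivity)
  have hθ0d : θ0 ^ d = t0 := by
    rw [hθ0def, ← Real.rpow_mul ht0pos.le, one_div, inv_mul_cancel₀ hd.ne', Real.rpow_one]
  set ε : ℝ := r * θ0 with hεdef
  set A : Set (EuclideanSpace ℝ (Fin D)) := Metric.ball x ε with hAdef
  set p : ℝ := (μ A).toReal with hpdef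
  have hp1 : p ≤ 1 := by
    have h := measure_mono (μ := μ) (Set.subset_univ A)
    have := ENNReal.toReal_mono (by simp) h
    simpa using this
  have hp0 : 0 ≤ p := ENNReal.toReal_nonneg
  have hq : 8 * L ≤ ↑s * p := by
    rcases hθ0le.lt_or_eq with hlt | heq
    · have h1 := hhom θ0 ⟨hθ0pos, hlt⟩
      rw [mul_comm θ0 r, ← hεdef, ← hAdef, ← hpdef, Real.rpow_neg hθ0pos.le, hθ0d] at h1
      have hinv : t0 * t0⁻¹ = 1 := mul_inv_cancel₀ ht0pos.ne'
      have h2 : pB * t0 ≤ C * p := by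
        have h4 := mul_le_mul_of_nonneg_right h1 ht0pos.le
        have h5 : C * t0⁻¹ * p * t0 = C * p := by field_simp
        rw [h5] at h4; exact h4
      have h3 : pB * t0 = 8 * C * L / ↑s := by
        rw [ht0def]; field_simp
      rw [h3] at h2
      rw [div_le_iff₀ hsR] at h2
      nlinarith
    · have ht01 : t0 = 1 := by rw [← hθ0d, heq, Real.one_rpow]
      have hεr : ε = r := by rw [hεdef, heq, mul_one]
      have hpp : p = pB := by rw [hpdef, hAdef, hεr, hpBdef]
      have h8 : 8 * C * L = pB * ↑s := by
        have h9 := ht01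
        rw [ht0def, div_eq_one_iff_eq (by positivity)] at h9
        exact h9
      nlinarith
  -- the indicator variables
  set Y : Fin s → Ω → ℝ := fun i => Set.indicator A (fun _ => (1:ℝ)) ∘ X i with hYdef
  have hYmeas : ∀ i, Measurable (Y i) := fun i =>
    (measurable_const.indicator Metric.isOpen_ball.measurableSet).comp (hmeas i)
  have hYindep : iIndepFun Y volume :=
    hindep.comp _ (fun i => measurable_const.indicator Metric.isOpen_ball.measurableSet)
  have hBmeas : ∀ i, MeasurableSet ((X i) ⁻¹' A) := fun i =>
    (hmeas i) Metric.isOpen_ball.measurableSet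
  have hprob : ∀ i, ((volume : Measure Ω) ((X i) ⁻¹' A)).toReal = p := by
    intro i
    rw [← Measure.map_apply (hmeas i) Metric.isOpen_ball.measurableSet, hlaw i, hpdef, hAdef]
  have hfun : ∀ (t : ℝ) (i : Fin s), (fun ω => Real.exp (t * Y i ω)) =
      fun ω => Set.indicator ((X i) ⁻¹' A) (fun _ => Real.exp t - 1) ω + 1 := by
    intro t i
    funext ω
    by_cases hω : X i ω ∈ A
    · have h1 : Y i ω = 1 := by simp [hYdef, Function.comp, Set.indicator_of_mem hω]
      have h2 : ω ∈ (X i) ⁻¹' A := hω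
      rw [h1, Set.indicator_of_mem h2]
      simp
    · have h1 : Y i ω = 0 := by simp [hYdef, Function.comp, Set.indicator_of_notMem hω]
      have h2 : ω ∉ (X i) ⁻¹' A := hω
      rw [h1, Set.indicator_of_notMem h2]
      simp
  have hYint : ∀ (t : ℝ) (i : Fin s),
      Integrable (fun ω => Real.exp (t * Y i ω)) (volume : Measure Ω) := by
    intro t i
    rw [hfun t i]
    exact ((integrable_const _).indicator (hBmeas i)).add (integrable_const 1)
  have hmgf : ∀ (t : ℝ) (i : Fin s),
      mgf (Y i) (volume : Measure Ω) t = 1 + p * (Real.exp t - 1) := by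
    intro t i
    rw [mgf]
    rw [hfun t i]
    rw [integral_add ((integrable_const _).indicator (hBmeas i)) (integrable_const 1)]
    rw [integral_indicator_const _ (hBmeas i), integral_const]
    simp [hprob i]
    rw [measureReal_def, hprob i]
    ring
  -- Chernoff bound for the lower tail
  set t1 : ℝ := -Real.log 2 with ht1def
  have ht1 : t1 ≤ 0 := neg_nonpos.mpr (Real.log_nonneg one_le_two)
  have hmgfS : mgf (∑ i, Y i) (volume : Measure Ω) t1 = (1 + p * (Real.exp t1 - 1)) ^ s := by
    rw [hYindep.mgf_sum hYmeas Finset.univ]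
    simp [hmgf t1]
  have hchern := measure_le_le_exp_mul_mgf (μ := (volume : Measure Ω)) (X := ∑ i, Y i)
    ((k:ℝ) - 1) ht1 (hYindep.integrable_exp_mul_sum hYmeas (fun i _ => hYint t1 i))
  rw [hmgfS] at hchern
  have hexpt1 : Real.exp t1 = 1/2 := by
    rw [ht1def, Real.exp_neg, Real.exp_log two_pos]; norm_num
  have hhalf : (1 : ℝ) + p * (Real.exp t1 - 1) = 1 - p/2 := by rw [hexpt1]; ring
  rw [hhalf] at hchern
  -- numeric bound on the tail
  have htail : ((volume : Measure Ω) {ω | (∑ i, Y i) ω ≤ (k:ℝ) - 1}).toReal ≤ δ := by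
    refine hchern.trans ?_
    have h1 : (1 - p/2 : ℝ) ≤ Real.exp (-(p/2)) := by
      have := Real.add_one_le_exp (-(p/2)); linarith
    have h2 : (0:ℝ) ≤ 1 - p/2 := by linarith
    have h3 : (1 - p/2 : ℝ)^s ≤ Real.exp (-(p/2))^s := pow_le_pow_left₀ h2 h1 s
    have h4 : Real.exp (-(p/2))^s = Real.exp ((s:ℝ) * (-(p/2))) := (Real.exp_nat_mul _ s).symm
    have h5 : Real.exp ((s:ℝ) * (-(p/2))) ≤ Real.exp (-(4*L)) :=
      Real.exp_le_exp.mpr (by nlinarith)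
    have h6 : (1 - p/2 : ℝ)^s ≤ Real.exp (-(4*L)) := by
      rw [← h4] at h5; exact h3.trans h5
    calc Real.exp (-t1 * ((k:ℝ) - 1)) * (1 - p/2)^s
        ≤ Real.exp (-t1 * ((k:ℝ) - 1)) * Real.exp (-(4*L)) := by
          exact mul_le_mul_of_nonneg_left h6 (Real.exp_pos _).le
      _ = Real.exp (-t1 * ((k:ℝ) - 1) + -(4*L)) := (Real.exp_add _ _).symm
      _ ≤ δ := by
          rw [← Real.exp_log hδ0]
          apply Real.exp_le_exp.mpr
          have hlogδ : Real.log δ ≤ -Real.log 2 - (k:ℝ)/2 := by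
            have := Real.log_le_log hδ0 hδhi
            rw [Real.log_mul (by norm_num) (Real.exp_ne_zero _), Real.log_exp,
              one_div, Real.log_inv] at this
            linarith
          have hLval : L = Real.log 2 - Real.log δ := by
            rw [hLdef, Real.log_div two_ne_zero hδ0.ne']
          have hlog2 : Real.log 2 < 0.6931471808 := Real.log_two_lt_d9
          have hlog2' : 0 < Real.log 2 := Real.log_pos one_lt_two
          rw [ht1def]
          nlinarith [hkR]
  -- the event that at least k samples fall in A
  set F : Set Ω := {ω | (k:ℝ) ≤ (∑ i, Y i) ω} with hFdef
  have hSmeas : Measurable (∑ i, Y i) := by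
    have : (∑ i, Y i) = fun ω => ∑ i, Y i ω := by
      funext ω; simp [Finset.sum_apply]
    rw [this]
    exact Finset.measurable_sum Finset.univ (fun i _ => hYmeas i)
  have hFmeas : MeasurableSet F := measurableSet_le measurable_const hSmeas
  have hval : ∀ ω, (∑ i, Y i) ω = ((Finset.univ.filter (fun i => X i ω ∈ A)).card : ℝ) := by
    intro ω
    rw [Finset.sum_apply, Finset.card_filter]
    push_cast
    refine Finset.sum_congr rfl fun i _ => ?_
    by_cases h : X i ω ∈ A
    · simp [hYdef, Function.comp, Set.indicator_of_mem h, h]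
    · simp [hYdef, Function.comp, Set.indicator_of_notMem h, h]
  have hcompl : Fᶜ ⊆ {ω | (∑ i, Y i) ω ≤ (k:ℝ) - 1} := by
    intro ω hω
    simp only [hFdef, Set.mem_compl_iff, Set.mem_setOf_eq, not_le] at hω ⊢
    rw [hval ω] at hω ⊢
    have h1 : (Finset.univ.filter (fun i => X i ω ∈ A)).card < k := by exact_mod_cast hω
    have h2 : (Finset.univ.filter (fun i => X i ω ∈ A)).card + 1 ≤ k := h1
    have h3 : ((Finset.univ.filter (fun i => X i ω ∈ A)).card : ℝ) + 1 ≤ (k:ℝ) := by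
      exact_mod_cast h2
    linarith
  have hsubF : F ⊆ {ω | ∃ I : Finset (Fin s), k ≤ I.card ∧
      ∀ i ∈ I, dist (X i ω) x ≤ ε} := by
    intro ω hω
    refine ⟨Finset.univ.filter (fun i => X i ω ∈ A), ?_, ?_⟩
    · have h1 : (k:ℝ) ≤ ((Finset.univ.filter (fun i => X i ω ∈ A)).card : ℝ) := by
        rw [← hval ω]; exact hω
      exact_mod_cast h1
    · intro i hi
      have h2 : X i ω ∈ A := (Finset.mem_filter.mp hi).2
      rw [hAdef, Metric.mem_ball] at h2
      exact h2.le
  have hFc : ((volume : Measure Ω) Fᶜ).toReal ≤ δ :=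
    le_trans (ENNReal.toReal_mono (measure_ne_top _ _) (measure_mono hcompl)) htail
  have hFval : ((volume : Measure Ω) F).toReal = 1 - ((volume : Measure Ω) Fᶜ).toReal := by
    rw [prob_compl_eq_one_sub hFmeas, ENNReal.toReal_sub_of_le prob_le_one ENNReal.one_ne_top]
    simp
  calc 1 - δ ≤ ((volume : Measure Ω) F).toReal := by rw [hFval]; linarith
    _ ≤ _ := ENNReal.toReal_mono (measure_ne_top _ _) (measure_mono hsubF)
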